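/- arXiv:1703.10855 — 2 statements merged into one kernel-verified Lean document; each statement's English description precedes it below -/
import Mathlib

section
/- Let v : ℝ³ → ℝ³ be a C¹ vector field and let λ : ℝ³ → ℝ be a C² function with compact support. Then ∫_{ℝ³} (Δλ)(x) (v·∇λ)(x) dx = − Σ_{i,j=1}^{3} ∫_{ℝ³} (∂v_i/∂x_j)(x) (∂λ/∂x_i)(x) (∂λ/∂x_j)(x) dx + ½ ∫_{ℝ³} |∇λ(x)|² (div v)(x) dx. -/
open MeasureTheory

noncomputable section

/-- Partial derivative in the `i`-th coordinate direction on `ℝ³`. -/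
def pd {F : Type*} [NormedAddCommGroup F] [NormedSpace ℝ F]
    (f : EuclideanSpace ℝ (Fin 3) → F) (i : Fin 3) (x : EuclideanSpace ℝ (Fin 3)) : F :=
  fderiv ℝ f x (EuclideanSpace.single i 1)

/-- Divergence of a vector field on `ℝ³`. -/
def divg (v : EuclideanSpace ℝ (Fin 3) → EuclideanSpace ℝ (Fin 3))
    (x : EuclideanSpace ℝ (Fin 3)) : ℝ :=
  ∑ i, pd (fun y => v y i) i x

/-- Laplacian on `ℝ³`. -/
def lap {F : Type*} [NormedAddCommGroup F] [NormedSpace ℝ F]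
    (f : EuclideanSpace ℝ (Fin 3) → F) (x : EuclideanSpace ℝ (Fin 3)) : F :=
  ∑ i, pd (pd f i) i x

abbrev E3 := EuclideanSpace ℝ (Fin 3)

lemma contDiff_pd {n : ℕ} (f : E3 → ℝ) (hf : ContDiff ℝ (n + 1) f) (i : Fin 3) :
    ContDiff ℝ n (pd f i) :=
  (hf.fderiv_right (le_refl _)).clm_apply contDiff_const

lemma continuous_pd (f : E3 → ℝ) (hf : ContDiff ℝ 1 f) (i : Fin 3) :
    Continuous (pd f i) :=
  (hf.continuous_fderiv one_ne_zero).clm_apply continuous_const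

lemma hcs_pd (f : E3 → ℝ) (hf : HasCompactSupport f) (i : Fin 3) :
    HasCompactSupport (pd f i) :=
  (hf.fderiv (𝕜 := ℝ)).comp_left (g := fun L : E3 →L[ℝ] ℝ => L (EuclideanSpace.single i 1)) rfl

lemma pd_mul (a b : E3 → ℝ) (i : Fin 3) (x : E3) (ha : DifferentiableAt ℝ a x)
    (hb : DifferentiableAt ℝ b x) :
    pd (fun y => a y * b y) i x = pd a i x * b x + a x * pd b i x := by
  unfold pd
  rw [fderiv_fun_mul ha hb]
  simp only [ContinuousLinearMap.add_apply, ContinuousLinearMap.smul_apply, smul_eq_mul]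
  ring

lemma pd_symm (l : E3 → ℝ) (hl : ContDiff ℝ 2 l) (i j : Fin 3) (x : E3) :
    pd (pd l i) j x = pd (pd l j) i x := by
  have hd : DifferentiableAt ℝ (fderiv ℝ l) x :=
    ((hl.fderiv_right (m := 1) (by norm_num)).differentiable one_ne_zero) x
  have key : ∀ a b : Fin 3, pd (pd l a) b x =
      fderiv ℝ (fderiv ℝ l) x (EuclideanSpace.single b 1) (EuclideanSpace.single a 1) := by
    intro a b
    unfold pd
    rw [fderiv_clm_apply hd (differentiableAt_const _)]
    simp
  rw [key i j, key j i]
  exact (hl.contDiffAt.isSymmSndFDerivAt (by norm_num)) _ _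

lemma integral_pd_eq_zero (g : E3 → ℝ) (hg : ContDiff ℝ 1 g) (hgs : HasCompactSupport g)
    (i : Fin 3) : ∫ x, pd g i x = 0 := by
  obtain ⟨C, hC⟩ := (hgs.fderiv (𝕜 := ℝ)).exists_bound_of_continuous (hg.continuous_fderiv one_ne_zero)
  have hlip : LipschitzWith (Real.toNNReal C) g := by
    apply lipschitzWith_of_nnnorm_fderiv_le (hg.differentiable one_ne_zero)
    intro x
    rw [← Real.toNNReal_coe (r := ‖fderiv ℝ g x‖₊)]
    exact Real.toNNReal_le_toNNReal (hC x)
  have h := LipschitzWith.integral_lineDeriv_mul_eq (μ := volume) (f := fun _ : E3 => (1:ℝ))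
    (LipschitzWith.const' (K := 0) 1) hlip hgs (EuclideanSpace.single i 1)
  have h1 : ∀ x : E3, lineDeriv ℝ (fun _ : E3 => (1:ℝ)) x (EuclideanSpace.single i 1) = 0 := by
    intro x
    rw [(differentiableAt_const (1:ℝ)).lineDeriv_eq_fderiv, fderiv_fun_const]
    simp
  simp only [h1, zero_mul, integral_zero, mul_one] at h
  have h2 : ∀ x, lineDeriv ℝ g x (-(EuclideanSpace.single i 1)) = -(pd g i x) := by
    intro x
    rw [DifferentiableAt.lineDeriv_eq_fderiv (hg.differentiable one_ne_zero x), map_neg]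
    rfl
  simp only [h2, integral_neg] at h
  linarith [h]


lemma integrable_A (v : E3 → E3) (l : E3 → ℝ)
    (hv : ContDiff ℝ 1 v) (hl : ContDiff ℝ 2 l) (hls : HasCompactSupport l) (i j : Fin 3) :
    Integrable (fun x => pd (pd l j) j x * (v x i * pd l i x)) := by
  have hl2 : ContDiff ℝ ((1:ℕ) + 1) l := by exact_mod_cast hl
  have hli : ContDiff ℝ 1 (pd l i) := contDiff_pd l hl2 i
  have hlj : ContDiff ℝ 1 (pd l j) := contDiff_pd l hl2 j
  have hvi : ContDiff ℝ 1 (fun y => v y i) := (EuclideanSpace.proj (𝕜 := ℝ) i).contDiff.comp hv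
  exact Continuous.integrable_of_hasCompactSupport
    ((continuous_pd _ hlj j).mul ((hvi.continuous).mul (hli.continuous)))
    (hcs_pd _ (hcs_pd l hls j) j).mul_right

lemma integrable_B (v : E3 → E3) (l : E3 → ℝ)
    (hv : ContDiff ℝ 1 v) (hl : ContDiff ℝ 2 l) (hls : HasCompactSupport l) (i j : Fin 3) :
    Integrable (fun x => pd (fun y => v y i) j x * pd l i x * pd l j x) := by
  have hl2 : ContDiff ℝ ((1:ℕ) + 1) l := by exact_mod_cast hl
  have hli : ContDiff ℝ 1 (pd l i) := contDiff_pd l hl2 i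
  have hlj : ContDiff ℝ 1 (pd l j) := contDiff_pd l hl2 j
  have hvi : ContDiff ℝ 1 (fun y => v y i) := (EuclideanSpace.proj (𝕜 := ℝ) i).contDiff.comp hv
  exact Continuous.integrable_of_hasCompactSupport
    (((continuous_pd _ hvi j).mul hli.continuous).mul hlj.continuous) (hcs_pd l hls j).mul_left

lemma integrable_D (v : E3 → E3) (l : E3 → ℝ)
    (hv : ContDiff ℝ 1 v) (hl : ContDiff ℝ 2 l) (hls : HasCompactSupport l) (i j : Fin 3) :
    Integrable (fun x => (pd l j x)^2 * pd (fun y => v y i) i x) := by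
  have hl2 : ContDiff ℝ ((1:ℕ) + 1) l := by exact_mod_cast hl
  have hlj : ContDiff ℝ 1 (pd l j) := contDiff_pd l hl2 j
  have hvi : ContDiff ℝ 1 (fun y => v y i) := (EuclideanSpace.proj (𝕜 := ℝ) i).contDiff.comp hv
  refine Continuous.integrable_of_hasCompactSupport
    ((hlj.continuous.pow 2).mul (continuous_pd _ hvi i)) ?_
  have : HasCompactSupport (fun x => (pd l j x)^2) :=
    (hcs_pd l hls j).comp_left (g := fun t : ℝ => t^2) (by simp)
  exact this.mul_right

set_option maxHeartbeats 1000000 in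
lemma key_ij (v : E3 → E3) (l : E3 → ℝ)
    (hv : ContDiff ℝ 1 v) (hl : ContDiff ℝ 2 l) (hls : HasCompactSupport l) (i j : Fin 3) :
    ∫ x, pd (pd l j) j x * (v x i * pd l i x)
      = -(∫ x, pd (fun y => v y i) j x * pd l i x * pd l j x)
        + (1/2 : ℝ) * ∫ x, (pd l j x)^2 * pd (fun y => v y i) i x := by
  have hl2 : ContDiff ℝ ((1:ℕ) + 1) l := by exact_mod_cast hl
  have hli : ContDiff ℝ 1 (pd l i) := contDiff_pd l hl2 i
  have hlj : ContDiff ℝ 1 (pd l j) := contDiff_pd l hl2 j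
  have hvi : ContDiff ℝ 1 (fun y => v y i) := (EuclideanSpace.proj (𝕜 := ℝ) i).contDiff.comp hv
  have hcsli : HasCompactSupport (pd l i) := hcs_pd l hls i
  have hcslj : HasCompactSupport (pd l j) := hcs_pd l hls j
  have dvi : Differentiable ℝ (fun y => v y i) := hvi.differentiable one_ne_zero
  have dli : Differentiable ℝ (pd l i) := hli.differentiable one_ne_zero
  have dlj : Differentiable ℝ (pd l j) := hlj.differentiable one_ne_zero
  -- integrability of the four integrands
  have iA : Integrable (fun x => pd (pd l j) j x * (v x i * pd l i x)) :=
    integrable_A v l hv hl hls i j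
  have iB : Integrable (fun x => pd (fun y => v y i) j x * pd l i x * pd l j x) :=
    integrable_B v l hv hl hls i j
  have iC : Integrable (fun x => v x i * (pd l j x * pd (pd l j) i x)) :=
    Continuous.integrable_of_hasCompactSupport
      ((hvi.continuous).mul (hlj.continuous.mul (continuous_pd _ hlj i)))
      ((hcslj.mul_right).mul_left)
  have iD : Integrable (fun x => (pd l j x)^2 * pd (fun y => v y i) i x) :=
    integrable_D v l hv hl hls i j
  -- first integration by parts
  have h1 : ∫ x, pd (fun y => pd l j y * (v y i * pd l i y)) j x = 0 :=
    integral_pd_eq_zero _ (hlj.mul (hvi.mul hli)) hcslj.mul_right j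
  have e1 : ∀ x, pd (fun y => pd l j y * (v y i * pd l i y)) j x =
      pd (pd l j) j x * (v x i * pd l i x)
      + pd (fun y => v y i) j x * pd l i x * pd l j x
      + v x i * (pd l j x * pd (pd l j) i x) := by
    intro x
    have t1 := pd_mul (pd l j) (fun y => v y i * pd l i y) j x (dlj x) ((dvi x).mul (dli x))
    have t2 := pd_mul (fun y => v y i) (pd l i) j x (dvi x) (dli x)
    rw [t1, t2, pd_symm l hl i j x]
    ring
  simp only [e1] at h1
  have h1' : (∫ x, pd (pd l j) j x * (v x i * pd l i x))
      + (∫ x, pd (fun y => v y i) j x * pd l i x * pd l j x)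
      + (∫ x, v x i * (pd l j x * pd (pd l j) i x)) = 0 := by
    rw [← integral_add iA iB, ← integral_add
      (f := fun x => pd (pd l j) j x * (v x i * pd l i x)
        + pd (fun y => v y i) j x * pd l i x * pd l j x) (iA.add iB) iC]
    exact h1
  -- second integration by parts
  have h2 : ∫ x, pd (fun y => v y i * (pd l j y * pd l j y)) i x = 0 :=
    integral_pd_eq_zero _ (hvi.mul (hlj.mul hlj)) ((hcslj.mul_right).mul_left) i
  have e2 : ∀ x, pd (fun y => v y i * (pd l j y * pd l j y)) i x =
      (pd l j x)^2 * pd (fun y => v y i) i x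
      + 2 * (v x i * (pd l j x * pd (pd l j) i x)) := by
    intro x
    have t1 := pd_mul (fun y => v y i) (fun y => pd l j y * pd l j y) i x (dvi x)
      ((dlj x).mul (dlj x))
    have t2 := pd_mul (pd l j) (pd l j) i x (dlj x) (dlj x)
    rw [t1, t2]
    ring
  simp only [e2] at h2
  have h2' : (∫ x, (pd l j x)^2 * pd (fun y => v y i) i x)
      + 2 * (∫ x, v x i * (pd l j x * pd (pd l j) i x)) = 0 := by
    rw [← integral_const_mul, ← integral_add iD (iC.const_mul 2)]
    exact h2
  linarith
set_option maxHeartbeats 1000000 in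
/-- Rellich-type multiplier identity
`∫ Δλ (v·∇λ) = - Σ_{i,j} ∫ (∂vᵢ/∂xⱼ)(∂λ/∂xᵢ)(∂λ/∂xⱼ) + ½ ∫ |∇λ|² div v`
for a `C¹` vector field `v` and a compactly supported `C²` function `λ` on `ℝ³`. -/
theorem rellich_multiplier_identity
    (v : EuclideanSpace ℝ (Fin 3) → EuclideanSpace ℝ (Fin 3))
    (l : EuclideanSpace ℝ (Fin 3) → ℝ)
    (hv : ContDiff ℝ 1 v) (hl : ContDiff ℝ 2 l) (hls : HasCompactSupport l) :
    ∫ x, lap l x * (∑ i, v x i * pd l i x)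
      = -(∑ i, ∑ j, ∫ x, pd (fun y => v y i) j x * pd l i x * pd l j x)
        + (1 / 2) * ∫ x, (∑ i, (pd l i x) ^ 2) * divg v x := by
  have e1 : ∀ x, lap l x * (∑ i, v x i * pd l i x)
      = ∑ i, ∑ j, pd (pd l j) j x * (v x i * pd l i x) := by
    intro x
    rw [lap, Finset.sum_mul_sum, Finset.sum_comm]
  have e2 : ∀ x, (∑ i, (pd l i x) ^ 2) * divg v x
      = ∑ i, ∑ j, (pd l j x)^2 * pd (fun y => v y i) i x := by
    intro x
    rw [divg, Finset.sum_mul_sum, Finset.sum_comm]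
  have hL : ∫ x, lap l x * (∑ i, v x i * pd l i x)
      = ∑ i, ∑ j, ∫ x, pd (pd l j) j x * (v x i * pd l i x) := by
    simp only [e1]
    rw [integral_finset_sum _
      (fun i _ => integrable_finset_sum _ (fun j _ => integrable_A v l hv hl hls i j))]
    exact Finset.sum_congr rfl fun i _ =>
      integral_finset_sum _ (fun j _ => integrable_A v l hv hl hls i j)
  have hR : ∫ x, (∑ i, (pd l i x) ^ 2) * divg v x
      = ∑ i, ∑ j, ∫ x, (pd l j x)^2 * pd (fun y => v y i) i x := by
    simp only [e2]
    rw [integral_finset_sum _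
      (fun i _ => integrable_finset_sum _ (fun j _ => integrable_D v l hv hl hls i j))]
    exact Finset.sum_congr rfl fun i _ =>
      integral_finset_sum _ (fun j _ => integrable_D v l hv hl hls i j)
  rw [hL, hR]
  rw [Finset.sum_congr rfl (fun i _ => Finset.sum_congr rfl
    (fun j _ => key_ij v l hv hl hls i j))]
  simp only [Finset.sum_add_distrib, Finset.sum_neg_distrib, ← Finset.mul_sum]


end
end

section
/- Let k > 0, let v : ℝ³ → ℝ³ be a C¹ vector field, and let λ : ℝ³ → ℝ be a C¹ function with compact support satisfying kλ(x) + (v·∇λ)(x) + ½(div v)(x)·λ(x) = 0 for every x ∈ ℝ³. Then λ is identically zero. -/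
open MeasureTheory
noncomputable section
/-- uniqueness for the stationary transport equation: if `k > 0`,
`v` is a `C¹` vector field, and `λ` is a compactly supported `C¹` function with
`kλ + v·∇λ + ½(div v)λ = 0` everywhere, then `λ ≡ 0`. -/
theorem transport_uniqueness
    (k : ℝ) (hk : 0 < k)
    (v : EuclideanSpace ℝ (Fin 3) → EuclideanSpace ℝ (Fin 3))
    (l : EuclideanSpace ℝ (Fin 3) → ℝ)
    (hv : ContDiff ℝ 1 v) (hl : ContDiff ℝ 1 l) (hls : HasCompactSupport l)
    (heq : ∀ x, k * l x + (∑ i, v x i * pd l i x)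
        + (1 / 2) * divg v x * l x = 0) :
    ∀ x, l x = 0 := by
  set e : Fin 3 → EuclideanSpace ℝ (Fin 3) := fun i => EuclideanSpace.single i 1 with he
  set q : EuclideanSpace ℝ (Fin 3) → ℝ := fun x => l x * l x with hq
  have hld : Differentiable ℝ l := hl.differentiable one_ne_zero
  have hqc : ContDiff ℝ 1 q := hl.mul hl
  have hqd : Differentiable ℝ q := hqc.differentiable one_ne_zero
  have hqs : HasCompactSupport q := hls.mul_right
  -- v components
  have hvi : ∀ i : Fin 3, ContDiff ℝ 1 (fun x => v x i) := fun i =>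
    (ContinuousLinearMap.contDiff (EuclideanSpace.proj i : EuclideanSpace ℝ (Fin 3) →L[ℝ] ℝ)).comp hv
  have hvid : ∀ i : Fin 3, Differentiable ℝ (fun x => v x i) := fun i =>
    (hvi i).differentiable one_ne_zero
  -- continuity of derivatives
  have hpdl : ∀ i : Fin 3, Continuous (fun x => fderiv ℝ l x (e i)) := fun i =>
    (hl.continuous_fderiv one_ne_zero).clm_apply continuous_const
  have hpdq : ∀ i : Fin 3, Continuous (fun x => fderiv ℝ q x (e i)) := fun i =>
    (hqc.continuous_fderiv one_ne_zero).clm_apply continuous_const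
  have hpdv : ∀ i : Fin 3, Continuous (fun x => fderiv ℝ (fun y => v y i) x (e i)) := fun i =>
    ((hvi i).continuous_fderiv one_ne_zero).clm_apply continuous_const
  -- compact support of derivative of q
  have hqds : ∀ i : Fin 3, HasCompactSupport (fun x => fderiv ℝ q x (e i)) := by
    intro i
    exact ((hqs.fderiv ℝ).comp_left (g := fun L : EuclideanSpace ℝ (Fin 3) →L[ℝ] ℝ => L (e i)) rfl)
  have hdivc : Continuous (divg v) := by
    apply continuous_finset_sum
    intro i _
    exact hpdv i
  -- integrability facts
  have hqint : Integrable q := (hqc.continuous).integrable_of_hasCompactSupport hqs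
  have hdivq_int : Integrable (fun x => divg v x * q x) :=
    (hdivc.mul hqc.continuous).integrable_of_hasCompactSupport hqs.mul_left
  -- integration by parts for each coordinate
  have ibp : ∀ i : Fin 3, ∫ x, v x i * fderiv ℝ q x (e i)
      = - ∫ x, fderiv ℝ (fun y => v y i) x (e i) * q x := by
    intro i
    apply integral_mul_fderiv_eq_neg_fderiv_mul_of_integrable
    · exact ((hpdv i).mul hqc.continuous).integrable_of_hasCompactSupport hqs.mul_left
    · exact ((hvi i).continuous.mul (hpdq i)).integrable_of_hasCompactSupport (hqds i).mul_left
    · exact ((hvi i).continuous.mul hqc.continuous).integrable_of_hasCompactSupport hqs.mul_left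
    · exact fun x _ => hvid i x
    · exact fun x _ => hqd x
  -- sum over i
  have hsum : ∫ x, (∑ i, v x i * fderiv ℝ q x (e i)) = - ∫ x, divg v x * q x := by
    have hint : ∀ i ∈ (Finset.univ : Finset (Fin 3)),
        Integrable (fun x => v x i * fderiv ℝ q x (e i)) := fun i _ =>
      ((hvi i).continuous.mul (hpdq i)).integrable_of_hasCompactSupport (hqds i).mul_left
    rw [integral_finset_sum _ hint]
    have : ∀ i ∈ (Finset.univ : Finset (Fin 3)),
        (∫ x, v x i * fderiv ℝ q x (e i)) = - ∫ x, fderiv ℝ (fun y => v y i) x (e i) * q x :=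
      fun i _ => ibp i
    rw [Finset.sum_congr rfl this, Finset.sum_neg_distrib, ← integral_finset_sum _
      (fun i _ => (show Integrable (fun x => fderiv ℝ (fun y => v y i) x (e i) * q x) from ((hpdv i).mul hqc.continuous).integrable_of_hasCompactSupport hqs.mul_left))]
    congr 1
    apply integral_congr_ae
    apply Filter.Eventually.of_forall
    intro x
    simp only [divg, pd, Finset.sum_mul, he]
  -- pointwise: fderiv q x (e i) = 2 l x * pd l i x
  have hfq : ∀ x (i : Fin 3), fderiv ℝ q x (e i) = 2 * l x * pd l i x := by
    intro x i
    have := fderiv_fun_mul (hld x) (hld x)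
    have h2 : fderiv ℝ q x (e i) = l x * fderiv ℝ l x (e i) + l x * fderiv ℝ l x (e i) := by
      rw [hq]
      simp only [this]
      simp [mul_comm]
    rw [h2, pd]; ring
  -- pointwise rewrite of the integrand using heq
  have hpt : ∀ x, (∑ i, v x i * fderiv ℝ q x (e i))
      = -(2 * k) * q x - divg v x * q x := by
    intro x
    have h1 : ∑ i, v x i * fderiv ℝ q x (e i) = 2 * l x * ∑ i, v x i * pd l i x := by
      rw [Finset.mul_sum]
      exact Finset.sum_congr rfl fun i _ => by rw [hfq x i]; ring
    have h2 : ∑ i, v x i * pd l i x = -(k * l x) - (1/2) * divg v x * l x := by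
      have := heq x; linarith
    rw [h1, h2, hq]; ring
  -- integrate
  have hIeq : ∫ x, (∑ i, v x i * fderiv ℝ q x (e i))
      = (-(2 * k) * ∫ x, q x) - ∫ x, divg v x * q x := by
    rw [integral_congr_ae (Filter.Eventually.of_forall hpt)]
    rw [integral_sub (hqint.const_mul _) hdivq_int, integral_const_mul]
  have hI0 : ∫ x, q x = 0 := by
    rw [hIeq] at hsum
    have hI : -(2*k) * ∫ x, q x = 0 := by linear_combination hsum
    have hk2 : (-(2 * k) : ℝ) ≠ 0 := neg_ne_zero.mpr (by positivity)
    exact (mul_eq_zero.mp hI).resolve_left hk2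
  -- conclude
  have hq0 : ∀ x, q x = 0 := by
    have hnn : 0 ≤ᵐ[volume] q := Filter.Eventually.of_forall fun x => mul_self_nonneg (l x)
    have := (integral_eq_zero_iff_of_nonneg_ae hnn hqint).mp hI0
    intro x
    have := (hqc.continuous.ae_eq_iff_eq volume continuous_const).mp this
    exact congrFun this x
  intro x
  have := hq0 x
  have : l x * l x = 0 := this
  exact mul_self_eq_zero.mp this
end
end
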